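/- Let B = x_1…x_t be a broken cycle (each consecutive pair is either an 'actual' edge of G' or a 'broken' pair lying in a common part of one of the two partitions) with an odd number of actual edges and containing no kinks. Then there exists a simple broken cycle with an odd number of actual edges whose vertex set is contained in V(B). -/

import Mathlib

/-- A broken cycle of length `t` with respect to a graph `G` on `[n]` and two
partitions of `[n]` (given by their part-labelling functions `fR`, `fB`):
a cyclic sequence of vertices (encoded as a `t`-periodic function `x : ℕ → Fin n`)
together with a marking of each step as an actual edge of `G` or a broken edge,
where a broken edge must lie in a common part of one of the two partitions. -/
structure BrokenCycle (n : ℕ) (G : SimpleGraph (Fin n)) (fR fB : Fin n → ℕ) where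
  t : ℕ
  tpos : 0 < t
  x : ℕ → Fin n
  hper : ∀ i, x (i + t) = x i
  actual : ℕ → Bool
  hperA : ∀ i, actual (i + t) = actual i
  hadj : ∀ i, actual i = true → G.Adj (x i) (x (i + 1))
  hbroken : ∀ i, actual i = false →
    fR (x i) = fR (x (i + 1)) ∨ fB (x i) = fB (x (i + 1))

namespace BrokenCycle

variable {n : ℕ} {G : SimpleGraph (Fin n)} {fR fB : Fin n → ℕ}

/-- The number of actual edges of a broken cycle. -/
def numActual (B : BrokenCycle n G fR fB) : ℕ :=
  ((Finset.range B.t).filter fun i => B.actual i = true).card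

/-- The (unordered) pair of red part-labels of the `i`-th step. -/
def labR (B : BrokenCycle n G fR fB) (i : ℕ) : Sym2 ℕ := s(fR (B.x i), fR (B.x (i + 1)))

/-- The (unordered) pair of blue part-labels of the `i`-th step. -/
def labB (B : BrokenCycle n G fR fB) (i : ℕ) : Sym2 ℕ := s(fB (B.x i), fB (B.x (i + 1)))

/-- A broken cycle is simple if its actual edges form a simple graph with respect
to the two partitions: no two distinct actual edges lie in a common `V_i × V_j`
(`i ≠ j`), nor in a common `W_i × W_j` (`i ≠ j`). -/
def Simple (B : BrokenCycle n G fR fB) : Prop :=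
  ∀ i ∈ Finset.range B.t, ∀ j ∈ Finset.range B.t, i ≠ j →
    B.actual i = true → B.actual j = true →
      ¬(B.labR i = B.labR j ∧ ¬(B.labR i).IsDiag) ∧
      ¬(B.labB i = B.labB j ∧ ¬(B.labB i).IsDiag)

/-- A kink: a pair of incident actual edges lying in a common `V_i × V_j`
(`i ≠ j`) or a common `W_i × W_j` (`i ≠ j`). -/
def HasKink (B : BrokenCycle n G fR fB) : Prop :=
  ∃ i ∈ Finset.range B.t, ∃ j ∈ Finset.range B.t, i ≠ j ∧
    B.actual i = true ∧ B.actual j = true ∧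
    ({B.x i, B.x (i + 1)} ∩ {B.x j, B.x (j + 1)} : Set (Fin n)).Nonempty ∧
    ((B.labR i = B.labR j ∧ ¬(B.labR i).IsDiag) ∨
      (B.labB i = B.labB j ∧ ¬(B.labB i).IsDiag))

end BrokenCycle

section Aux

open List

variable {n : ℕ} (G : SimpleGraph (Fin n)) (fR fB : Fin n → ℕ)

/-- A dart: ordered edge with a marker (true = actual). -/
abbrev Dt (n : ℕ) := Fin n × Fin n × Bool

def swapD (d : Dt n) : Dt n := (d.2.1, d.1, d.2.2)

/-- The "edge data" of a dart: unordered pair plus marker. -/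
def edd (d : Dt n) : Sym2 (Fin n) × Bool := (s(d.1, d.2.1), d.2.2)

def okD (d : Dt n) : Prop :=
  (d.2.2 = true → G.Adj d.1 d.2.1) ∧
  (d.2.2 = false → fR d.1 = fR d.2.1 ∨ fB d.1 = fB d.2.1)

def lk (d e : Dt n) : Prop := d.2.1 = e.1

def labRE (p : Sym2 (Fin n) × Bool) : Sym2 ℕ := p.1.map fR
def labBE (p : Sym2 (Fin n) × Bool) : Sym2 ℕ := p.1.map fB

def badE (p q : Sym2 (Fin n) × Bool) : Prop :=
  (labRE fR p = labRE fR q ∧ ¬(labRE fR p).IsDiag) ∨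
  (labBE fB p = labBE fB q ∧ ¬(labBE fB p).IsDiag)

def touchE (p q : Sym2 (Fin n) × Bool) : Prop := ∃ v, v ∈ p.1 ∧ v ∈ q.1

def brkV (u v : Fin n) : Prop := fR u = fR v ∨ fB u = fB v

def GoodL (S : Set (Fin n)) (l : List (Dt n)) : Prop :=
  l ≠ [] ∧ (∀ d ∈ l, okD G fR fB d) ∧ l.IsChain lk ∧
  (∀ p ∈ l.getLast?, ∀ q ∈ l.head?, lk p q) ∧ (∀ d ∈ l, d.1 ∈ S ∧ d.2.1 ∈ S)

def cntT (l : List (Dt n)) : ℕ := l.countP (fun d => d.2.2)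

def KFL (l : List (Dt n)) : Prop :=
  ∀ p q, [p, q] <+~ l.map edd → p.2 = true → q.2 = true →
    ¬(touchE p q ∧ badE fR fB p q)

def SmpL (l : List (Dt n)) : Prop :=
  ∀ p q, [p, q] <+~ l.map edd → p.2 = true → q.2 = true → ¬ badE fR fB p q

lemma badE_symm {p q} (h : badE fR fB p q) : badE fR fB q p := by
  rcases h with ⟨h1, h2⟩ | ⟨h1, h2⟩
  · exact Or.inl ⟨h1.symm, h1 ▸ h2⟩
  · exact Or.inr ⟨h1.symm, h1 ▸ h2⟩

lemma touchE_symm {p q} (h : touchE (n := n) p q) : touchE q p := by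
  obtain ⟨v, h1, h2⟩ := h; exact ⟨v, h2, h1⟩

lemma edd_swapD (d : Dt n) : edd (swapD d) = edd d := by
  simp [edd, swapD, Sym2.eq_swap]

lemma okD_swapD {d : Dt n} (h : okD G fR fB d) : okD G fR fB (swapD d) :=
  ⟨fun ht => (h.1 ht).symm, fun hf => by
    rcases h.2 hf with h2 | h2
    · exact Or.inl h2.symm
    · exact Or.inr h2.symm⟩

lemma mem_of_getElem?' {α : Type*} {L : List α} {i : ℕ} {a : α}
    (h : L[i]? = some a) : a ∈ L := by
  obtain ⟨hi, rfl⟩ := List.getElem?_eq_some_iff.1 h; exact List.getElem_mem hi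

lemma pair_sublist_index {α : Type*} {a b : α} :
    ∀ {L : List α}, [a, b] <+ L →
      ∃ i j, i < j ∧ j < L.length ∧ L[i]? = some a ∧ L[j]? = some b := by
  intro L
  induction L with
  | nil => intro h; simp at h
  | cons c L ih =>
    intro h
    cases h with
    | cons _ h' =>
      obtain ⟨i, j, h1, h2, h3, h4⟩ := ih h'
      exact ⟨i + 1, j + 1, by omega, by simp; omega, by simpa using h3,
        by simpa using h4⟩
    | cons_cons _ h' =>
      have hb : b ∈ L := List.singleton_sublist.1 h'
      obtain ⟨⟨j, hj⟩, rfl⟩ := List.get_of_mem hb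
      exact ⟨0, j + 1, by omega, by simp; omega, by simp,
        by simpa using List.getElem?_eq_getElem hj⟩

lemma pair_subperm_index {α : Type*} [DecidableEq α] {a b : α} {L : List α}
    (h : [a, b] <+~ L) :
    ∃ i j, i ≠ j ∧ i < L.length ∧ j < L.length ∧
      ((L[i]? = some a ∧ L[j]? = some b) ∨ (L[i]? = some b ∧ L[j]? = some a)) := by
  obtain ⟨w, hw, hsub⟩ := h
  match w, hw.length_eq.symm, hw with
  | [x, y], _, hw =>
    have h1 : x ∈ [a, b] := hw.subset (by simp)
    simp only [List.mem_cons, List.mem_singleton, List.not_mem_nil, or_false] at h1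
    have key : (x = a ∧ y = b) ∨ (x = b ∧ y = a) := by
      rcases h1 with rfl | rfl
      · left; exact ⟨rfl, by simpa using (List.perm_cons x).1 hw⟩
      · right
        refine ⟨rfl, ?_⟩
        have hw2 : x :: [y] ~ x :: [a] := hw.trans (List.Perm.swap x a [])
        simpa using (List.perm_cons x).1 hw2
    obtain ⟨i, j, hij, hjl, hx, hy⟩ := pair_sublist_index hsub
    have hil : i < L.length := lt_trans hij hjl
    rcases key with ⟨rfl, rfl⟩ | ⟨rfl, rfl⟩
    · exact ⟨i, j, Nat.ne_of_lt hij, hil, hjl, Or.inl ⟨hx, hy⟩⟩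
    · exact ⟨i, j, Nat.ne_of_lt hij, hil, hjl, Or.inr ⟨hx, hy⟩⟩

lemma index_pair_sublist_lt {α : Type*} {L : List α} {i j : ℕ} {a b : α}
    (hij : i < j) (hj : j < L.length)
    (ha : L[i]? = some a) (hb : L[j]? = some b) : [a, b] <+ L := by
  have hi : i < L.length := lt_trans hij hj
  obtain ⟨_, rfl⟩ := List.getElem?_eq_some_iff.1 ha
  have hbmem : b ∈ L.drop (i + 1) := by
    apply mem_of_getElem?'
    rw [List.getElem?_drop]
    rw [show i + 1 + (j - (i + 1)) = j by omega]
    exact hb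
  have h1 : [L[i], b] <+ L[i] :: L.drop (i + 1) :=
    (List.singleton_sublist.2 hbmem).cons₂ _
  rw [List.getElem_cons_drop hi] at h1
  have h2 : [L[i], b] <+ L.take i ++ L.drop i :=
    List.sublist_append_of_sublist_right h1
  rwa [List.take_append_drop] at h2

lemma index_pair_subperm {α : Type*} {L : List α} {i j : ℕ} {a b : α}
    (hij : i ≠ j) (hi : i < L.length) (hj : j < L.length)
    (ha : L[i]? = some a) (hb : L[j]? = some b) : [a, b] <+~ L := by
  rcases lt_or_gt_of_ne hij with h | h
  · exact (index_pair_sublist_lt h hj ha hb).subperm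
  · exact ((List.Perm.swap b a []).subperm).trans
      (index_pair_sublist_lt h hi hb ha).subperm

lemma goodL_rotate {S : Set (Fin n)} {xs ys : List (Dt n)}
    (h : GoodL G fR fB S (xs ++ ys)) : GoodL G fR fB S (ys ++ xs) := by
  obtain ⟨hne, hok, hch, hwr, hmem⟩ := h
  rcases eq_or_ne xs [] with rfl | hxs
  · simpa using ⟨hne, hok, hch, hwr, hmem⟩
  rcases eq_or_ne ys [] with rfl | hys
  · simp only [List.append_nil] at hne hok hch hwr hmem
    exact ⟨by simpa using hne, by simpa using hok, hch, hwr, by simpa using hmem⟩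
  rw [List.isChain_append] at hch
  refine ⟨by simp [hys], ?_, ?_, ?_, ?_⟩
  · intro d hd
    exact hok d (by rw [List.mem_append] at hd ⊢; tauto)
  · rw [List.isChain_append]
    refine ⟨hch.2.1, hch.1, ?_⟩
    intro x hx y hy
    refine hwr x ?_ y ?_
    · rwa [List.getLast?_append_of_ne_nil _ hys]
    · rwa [List.head?_append_of_ne_nil _ hxs]
  · intro p hp q hq
    rw [List.getLast?_append_of_ne_nil _ hxs] at hp
    rw [List.head?_append_of_ne_nil _ hys] at hq
    exact hch.2.2 p hp q hq
  · intro d hd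
    exact hmem d (by rw [List.mem_append] at hd ⊢; tauto)

lemma KFL_perm {l l' : List (Dt n)} (hp : l ~ l') (h : KFL fR fB l) : KFL fR fB l' := by
  intro p q hsub hp2 hq2
  exact h p q (hsub.trans (hp.map edd).symm.subperm) hp2 hq2

def cntE (p : Sym2 (Fin n) × Bool) (l : List (Sym2 (Fin n) × Bool)) : ℕ :=
  l.countP (fun a => decide (a = p))

lemma count_eq_cntE {α : Type*} [DecidableEq α] [BEq α] [LawfulBEq α] (x : α) (L : List α) :
    List.count x L = L.countP (fun a => decide (a = x)) := by
  rw [List.count_eq_countP]; exact List.countP_congr (fun a _ => by simp)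

lemma KFL_of_count {l l' : List (Dt n)} (h : KFL fR fB l)
    (hc : ∀ p : Sym2 (Fin n) × Bool, p.2 = true →
      cntE p (l'.map edd) ≤ cntE p (l.map edd)) : KFL fR fB l' := by
  intro p q hsub hp hq
  refine h p q ?_ hp hq
  rw [subperm_ext_iff] at hsub ⊢
  intro x hx
  simp only [List.mem_cons, List.mem_singleton, List.not_mem_nil, or_false] at hx
  rw [count_eq_cntE, count_eq_cntE]
  rcases hx with rfl | rfl
  · have h1 := hsub x (by simp); rw [count_eq_cntE, count_eq_cntE] at h1; exact h1.trans (hc x hp)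
  · have h1 := hsub x (by simp); rw [count_eq_cntE, count_eq_cntE] at h1; exact h1.trans (hc x hq)

lemma bad_to_brk {d e : Dt n} (h : badE fR fB (edd d) (edd e)) :
    (brkV fR fB d.2.1 e.1 ∧ brkV fR fB d.1 e.2.1) ∨
    (brkV fR fB d.1 e.1 ∧ brkV fR fB d.2.1 e.2.1) := by
  rcases h with ⟨h1, _⟩ | ⟨h1, _⟩ <;>
    simp only [labRE, labBE, edd, Sym2.map_pair_eq, Sym2.eq_iff] at h1 <;>
    rcases h1 with ⟨ha, hb⟩ | ⟨ha, hb⟩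
  · exact Or.inr ⟨Or.inl ha, Or.inl hb⟩
  · exact Or.inl ⟨Or.inl hb, Or.inl ha⟩
  · exact Or.inr ⟨Or.inr ha, Or.inr hb⟩
  · exact Or.inl ⟨Or.inr hb, Or.inr ha⟩

lemma getLast?_cons_of_ne_nil {α : Type*} (a : α) {l : List α} (h : l ≠ []) :
    (a :: l).getLast? = l.getLast? := by
  rw [← List.singleton_append, List.getLast?_append_of_ne_nil _ h]

lemma anatomy {S : Set (Fin n)} {d e : Dt n} {M N : List (Dt n)}
    (h : GoodL G fR fB S (d :: M ++ e :: N)) (hM : M ≠ []) (hN : N ≠ []) :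
    IsChain lk M ∧ IsChain lk N ∧ (∀ y ∈ M.head?, d.2.1 = y.1) ∧
    (∀ x ∈ M.getLast?, x.2.1 = e.1) ∧ (∀ y ∈ N.head?, e.2.1 = y.1) ∧
    (∀ x ∈ N.getLast?, x.2.1 = d.1) := by
  obtain ⟨hne, hok, hch, hwr, hmem⟩ := h
  rw [List.isChain_append] at hch
  obtain ⟨hdM, heN, hmid⟩ := hch
  rw [List.isChain_cons] at hdM heN
  refine ⟨hdM.2, heN.2, hdM.1, ?_, heN.1, ?_⟩
  · intro x hx
    refine hmid x ?_ e (by simp)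
    rwa [getLast?_cons_of_ne_nil _ hM]
  · intro x hx
    refine hwr x ?_ d ?_
    · rw [List.getLast?_append_of_ne_nil _ (by simp), getLast?_cons_of_ne_nil _ hN]
      exact hx
    · rw [List.head?_append_of_ne_nil _ (by simp)]
      simp
  
lemma good_split1 {S : Set (Fin n)} {d e : Dt n} {M N : List (Dt n)}
    (h : GoodL G fR fB S (d :: M ++ e :: N)) (hM : M ≠ []) (hN : N ≠ [])
    (hbrk : brkV fR fB e.1 d.2.1) :
    GoodL G fR fB S (M ++ [(e.1, d.2.1, false)]) := by
  obtain ⟨hA1, _, hA3, hA4, _, _⟩ := anatomy G fR fB h hM hN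
  obtain ⟨_, hok, _, _, hmem⟩ := h
  refine ⟨by simp, ?_, ?_, ?_, ?_⟩
  · intro x hx
    simp only [List.mem_append, List.mem_singleton] at hx
    rcases hx with hx | rfl
    · exact hok x (by simp [hx])
    · exact ⟨by simp, fun _ => hbrk⟩
  · rw [List.isChain_append]
    refine ⟨hA1, by simp, ?_⟩
    intro x hx y hy
    simp only [List.head?_cons, Option.mem_some_iff] at hy
    subst hy
    exact hA4 x hx
  · intro p hp q hq
    rw [List.getLast?_append_of_ne_nil _ (by simp)] at hp
    rw [List.head?_append_of_ne_nil _ hM] at hq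
    simp only [List.getLast?_singleton, Option.mem_some_iff] at hp
    subst hp
    exact hA3 q hq
  · intro x hx
    simp only [List.mem_append, List.mem_singleton] at hx
    rcases hx with hx | rfl
    · exact hmem x (by simp [hx])
    · exact ⟨(hmem e (by simp)).1, (hmem d (by simp)).2⟩

lemma good_split2 {S : Set (Fin n)} {d e : Dt n} {M N : List (Dt n)}
    (h : GoodL G fR fB S (d :: M ++ e :: N)) (hM : M ≠ []) (hN : N ≠ [])
    (hbrk : brkV fR fB d.1 e.2.1) :
    GoodL G fR fB S ((d.1, e.2.1, false) :: N) := by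
  obtain ⟨_, hA2, _, _, hA5, hA6⟩ := anatomy G fR fB h hM hN
  obtain ⟨_, hok, _, _, hmem⟩ := h
  refine ⟨by simp, ?_, ?_, ?_, ?_⟩
  · intro x hx
    rcases List.mem_cons.1 hx with rfl | hx
    · exact ⟨by simp, fun _ => hbrk⟩
    · exact hok x (by simp [hx])
  · rw [List.isChain_cons]
    exact ⟨fun y hy => hA5 y hy, hA2⟩
  · intro p hp q hq
    simp only [List.head?_cons, Option.mem_some_iff] at hq
    subst hq
    rw [getLast?_cons_of_ne_nil _ hN] at hp
    exact hA6 p hp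
  · intro x hx
    rcases List.mem_cons.1 hx with rfl | hx
    · exact ⟨(hmem d (by simp)).1, (hmem e (by simp)).2⟩
    · exact hmem x (by simp [hx])

lemma good_rev {S : Set (Fin n)} {d e : Dt n} {M N : List (Dt n)}
    (h : GoodL G fR fB S (d :: M ++ e :: N)) (hM : M ≠ []) (hN : N ≠ [])
    (hbrk1 : brkV fR fB d.1 e.1) (hbrk2 : brkV fR fB d.2.1 e.2.1) :
    GoodL G fR fB S
      ((d.1, e.1, false) :: (M.reverse.map swapD) ++ (d.2.1, e.2.1, false) :: N) := by
  obtain ⟨hA1, hA2, hA3, hA4, hA5, hA6⟩ := anatomy G fR fB h hM hN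
  obtain ⟨_, hok, _, _, hmem⟩ := h
  have hrM : M.reverse.map swapD ≠ [] := by simp [hM]
  refine ⟨by simp, ?_, ?_, ?_, ?_⟩
  · intro x hx
    simp only [List.mem_append, List.mem_cons, List.mem_map, List.mem_reverse] at hx
    rcases hx with (rfl | ⟨m, hm, rfl⟩) | (rfl | hx)
    · exact ⟨by simp, fun _ => hbrk1⟩
    · exact okD_swapD G fR fB (hok m (by simp [hm]))
    · exact ⟨by simp, fun _ => hbrk2⟩
    · exact hok x (by simp [hx])
  · rw [List.isChain_append]
    refine ⟨?_, ?_, ?_⟩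
    · rw [List.isChain_cons]
      constructor
      · intro y hy
        rw [List.head?_map, List.head?_reverse] at hy
        simp only [Option.mem_def, Option.map_eq_some_iff] at hy
        obtain ⟨m, hm, rfl⟩ := hy
        exact (hA4 m hm).symm
      · rw [List.isChain_map, List.isChain_reverse]
        exact hA1.imp (fun a b hab => by simpa [lk, swapD, flip] using hab.symm)
    · rw [List.isChain_cons]
      exact ⟨fun y hy => hA5 y hy, hA2⟩
    · intro x hx y hy
      simp only [List.head?_cons, Option.mem_some_iff] at hy
      subst hy
      rw [getLast?_cons_of_ne_nil _ hrM, List.getLast?_map, List.getLast?_reverse] at hx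
      simp only [Option.mem_def, Option.map_eq_some_iff] at hx
      obtain ⟨m, hm, rfl⟩ := hx
      exact (hA3 m hm).symm
  · intro p hp q hq
    rw [List.head?_append_of_ne_nil _ (by simp)] at hq
    simp only [List.head?_cons, Option.mem_some_iff] at hq
    subst hq
    rw [List.getLast?_append_of_ne_nil _ (by simp), getLast?_cons_of_ne_nil _ hN] at hp
    exact hA6 p hp
  · intro x hx
    simp only [List.mem_append, List.mem_cons, List.mem_map, List.mem_reverse] at hx
    rcases hx with (rfl | ⟨m, hm, rfl⟩) | (rfl | hx)
    · exact ⟨(hmem d (by simp)).1, (hmem e (by simp)).1⟩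
    · have := hmem m (by simp [hm])
      exact ⟨this.2, this.1⟩
    · exact ⟨(hmem d (by simp)).2, (hmem e (by simp)).2⟩
    · exact hmem x (by simp [hx])

lemma brkV_symm {u v : Fin n} (h : brkV fR fB u v) : brkV fR fB v u := by
  rcases h with h | h
  · exact Or.inl h.symm
  · exact Or.inr h.symm

lemma decomp {α : Type*} {L : List α} {i j : ℕ} (hij : i < j) (hj : j < L.length) :
    L = L.take i ++ ((L[i]'(lt_trans hij hj) :: (L.drop (i+1)).take (j - i - 1)) ++
      (L[j]'hj :: L.drop (j+1))) := by
  have hi : i < L.length := lt_trans hij hj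
  have h1 : L[j]'hj :: L.drop (j+1) = L.drop j := List.getElem_cons_drop hj
  have h2 : (L.drop (i+1)).drop (j - i - 1) = L.drop j := by
    rw [List.drop_drop]; congr 1; omega
  rw [h1, ← h2, List.cons_append, List.take_append_drop,
    List.getElem_cons_drop, List.take_append_drop]

lemma exists_bad_pair {l : List (Dt n)} (h : ¬ SmpL fR fB l) :
    ∃ i j, ∃ (hj : j < l.length) (hi : i < l.length), i < j ∧
      (l[i]'hi).2.2 = true ∧ (l[j]'hj).2.2 = true ∧
      badE fR fB (edd (l[i]'hi)) (edd (l[j]'hj)) := by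
  simp only [SmpL, not_forall] at h
  obtain ⟨p, q, hsub, hp, hq, hbad⟩ := h
  rw [not_not] at hbad
  obtain ⟨i, j, hij, hi, hj, hcase⟩ := pair_subperm_index hsub
  have hi' : i < l.length := by simpa using hi
  have hj' : j < l.length := by simpa using hj
  have key : ∀ (r : Sym2 (Fin n) × Bool) (k : ℕ) (hk : k < l.length),
      (l.map edd)[k]? = some r → edd (l[k]'hk) = r := by
    intro r k hk hkr
    rw [List.getElem?_map, List.getElem?_eq_getElem hk] at hkr
    simpa using hkr
  rcases hcase with ⟨h1, h2⟩ | ⟨h1, h2⟩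
  · have e1 := key p i hi' h1
    have e2 := key q j hj' h2
    rcases lt_or_gt_of_ne hij with hlt | hgt
    · exact ⟨i, j, hj', hi', hlt, by rw [show (l[i]'hi').2.2 = (edd (l[i]'hi')).2 from rfl, e1]; exact hp,
        by rw [show (l[j]'hj').2.2 = (edd (l[j]'hj')).2 from rfl, e2]; exact hq,
        by rw [e1, e2]; exact hbad⟩
    · exact ⟨j, i, hi', hj', hgt, by rw [show (l[j]'hj').2.2 = (edd (l[j]'hj')).2 from rfl, e2]; exact hq,
        by rw [show (l[i]'hi').2.2 = (edd (l[i]'hi')).2 from rfl, e1]; exact hp,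
        by rw [e1, e2]; exact badE_symm fR fB hbad⟩
  · have e1 := key q i hi' h1
    have e2 := key p j hj' h2
    rcases lt_or_gt_of_ne hij with hlt | hgt
    · exact ⟨i, j, hj', hi', hlt, by rw [show (l[i]'hi').2.2 = (edd (l[i]'hi')).2 from rfl, e1]; exact hq,
        by rw [show (l[j]'hj').2.2 = (edd (l[j]'hj')).2 from rfl, e2]; exact hp,
        by rw [e1, e2]; exact badE_symm fR fB hbad⟩
    · exact ⟨j, i, hi', hj', hgt, by rw [show (l[j]'hj').2.2 = (edd (l[j]'hj')).2 from rfl, e2]; exact hp,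
        by rw [show (l[i]'hi').2.2 = (edd (l[i]'hi')).2 from rfl, e1]; exact hq,
        by rw [e1, e2]; exact hbad⟩

lemma cntE_false_singleton {p : Sym2 (Fin n) × Bool} (hp : p.2 = true) (u v : Fin n) :
    cntE p (List.map edd [(u, v, false)]) = 0 := by
  simp only [cntE, List.map_cons, List.map_nil, List.countP_cons, List.countP_nil]
  have : edd (u, v, false) ≠ p := by
    intro h; rw [← h] at hp; simp [edd] at hp
  simp [this]

lemma mainL {S : Set (Fin n)} :
    ∀ (Nb : ℕ) (l : List (Dt n)), cntT l < Nb →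
      GoodL G fR fB S l → KFL fR fB l → Odd (cntT l) →
      ∃ l', GoodL G fR fB S l' ∧ SmpL fR fB l' ∧ Odd (cntT l') := by
  intro Nb
  induction Nb with
  | zero => intro l h; omega
  | succ Nb ih =>
    intro l hlt hG hK hodd
    by_cases hs : SmpL fR fB l
    · exact ⟨l, hG, hs, hodd⟩
    obtain ⟨i, j, hj, hi, hij, hdi, hdj, hbad⟩ := exists_bad_pair fR fB hs
    set d := l[i]'hi with hd_def
    set e := l[j]'hj with he_def
    have hsubij : [edd d, edd e] <+~ l.map edd := by
      refine index_pair_subperm (L := l.map edd) (i := i) (j := j)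
        (Nat.ne_of_lt hij) (by simpa using lt_trans hij hj) (by simpa using hj) ?_ ?_
      · rw [List.getElem?_map, List.getElem?_eq_getElem hi]; rfl
      · rw [List.getElem?_map, List.getElem?_eq_getElem hj]; rfl
    have hnt : ¬ touchE (edd d) (edd e) :=
      fun ht => hK _ _ hsubij hdi hdj ⟨ht, hbad⟩
    set T := l.take i with hT
    set M := (l.drop (i+1)).take (j - i - 1) with hM_def
    set N := l.drop (j+1) with hN_def
    have hdec : l = T ++ ((d :: M) ++ (e :: N)) := decomp hij hj
    have hG2 : GoodL G fR fB S (T ++ ((d :: M) ++ (e :: N))) := hdec ▸ hG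
    have hG3 := goodL_rotate G fR fB hG2
    have hassoc : ((d :: M) ++ (e :: N)) ++ T = (d :: M) ++ (e :: (N ++ T)) := by simp
    have hG4 : GoodL G fR fB S (d :: M ++ e :: (N ++ T)) := by rwa [hassoc] at hG3
    have hpm : l ~ (d :: M ++ e :: (N ++ T)) := by
      rw [hdec, ← hassoc]
      exact List.perm_append_comm
    have hKrot := KFL_perm fR fB hpm hK
    have hcnt : cntT l = cntT M + cntT (N ++ T) + 2 := by
      have := hpm.countP_eq (fun x => x.2.2)
      simp only [cntT] at *
      rw [this]
      simp [List.countP_append, List.countP_cons, hdi, hdj]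
      omega
    -- M nonempty
    have htch : ∀ v : Fin n, v ∈ (edd d).1 → v ∈ (edd e).1 → False := by
      intro v h1 h2; exact hnt ⟨v, h1, h2⟩
    have hM : M ≠ [] := by
      intro hMe
      have hch := hG4.2.2.1
      rw [hMe] at hch
      have hlk : lk d e := List.isChain_append.1 hch |>.2.2 d (by simp) e (by simp)
      exact htch d.2.1 (by simp [edd]) (by rw [hlk]; simp [edd])
    have hN : N ++ T ≠ [] := by
      intro hNe
      have hwr := hG4.2.2.2.1
      rw [hNe] at hwr
      have hlk : lk e d := by
        refine hwr e ?_ d ?_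
        · rw [List.getLast?_append_of_ne_nil _ (by simp)]; simp
        · rw [List.head?_append_of_ne_nil _ (by simp)]; simp
      exact htch d.1 (by simp [edd]) (by rw [← hlk]; simp [edd])
    have hcm : cntT M + cntT (N ++ T) < Nb := by omega
    have hOddMN : Odd (cntT M + cntT (N ++ T)) := by
      rw [Nat.odd_iff] at hodd ⊢
      omega
    rcases bad_to_brk fR fB hbad with ⟨hb1, hb2⟩ | ⟨hb1, hb2⟩
    · -- split case
      have good1 := good_split1 G fR fB hG4 hM hN (brkV_symm fR fB hb1)
      have good2 := good_split2 G fR fB hG4 hM hN hb2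
      have hc1 : cntT (M ++ [(e.1, d.2.1, false)]) = cntT M := by
        simp [cntT, List.countP_append, List.countP_cons]
      have hc2 : cntT ((d.1, e.2.1, false) :: (N ++ T)) = cntT (N ++ T) := by
        simp [cntT, List.countP_cons]
      have hk1 : KFL fR fB (M ++ [(e.1, d.2.1, false)]) := by
        refine KFL_of_count fR fB hK ?_
        intro p hp
        have h0 := cntE_false_singleton hp e.1 d.2.1
        conv_rhs => rw [hdec]
        simp only [cntE, List.map_append, List.map_cons, List.countP_append,
          List.countP_cons] at h0 ⊢
        omega
      have hk2 : KFL fR fB ((d.1, e.2.1, false) :: (N ++ T)) := by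
        refine KFL_of_count fR fB hK ?_
        intro p hp
        have h0 := cntE_false_singleton hp d.1 e.2.1
        conv_rhs => rw [hdec]
        have : ((d.1, e.2.1, false) :: (N ++ T)) = [(d.1, e.2.1, false)] ++ N ++ T := by simp
        rw [this]
        simp only [cntE, List.map_append, List.map_cons, List.countP_append,
          List.countP_cons] at h0 ⊢
        omega
      rw [Nat.odd_iff] at hOddMN
      rcases Nat.even_or_odd (cntT M) with hEv | hOd
      · -- N++T piece is odd
        rw [Nat.even_iff] at hEv
        refine ih ((d.1, e.2.1, false) :: (N ++ T)) ?_ good2 hk2 ?_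
        · rw [hc2]; omega
        · rw [hc2, Nat.odd_iff]; omega
      · refine ih (M ++ [(e.1, d.2.1, false)]) ?_ good1 hk1 ?_
        · rw [hc1]
          rcases hOd with ⟨k, hk⟩
          omega
        · rwa [hc1]
    · -- reversal case
      have good3 := good_rev G fR fB hG4 hM hN hb1 hb2
      have hmapM : (M.reverse.map swapD).map edd = (M.map edd).reverse := by
        rw [List.map_map, List.map_reverse]
        congr 1
        exact List.map_congr_left (fun x _ => edd_swapD x)
      have hc3 : cntT ((d.1, e.1, false) :: (M.reverse.map swapD) ++
          (d.2.1, e.2.1, false) :: (N ++ T)) = cntT M + cntT (N ++ T) := by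
        simp [cntT, List.countP_append, List.countP_cons, List.countP_map,
          List.countP_reverse, Function.comp, swapD]
        rfl
      have hk3 : KFL fR fB ((d.1, e.1, false) :: (M.reverse.map swapD) ++
          (d.2.1, e.2.1, false) :: (N ++ T)) := by
        refine KFL_of_count fR fB hK ?_
        intro p hp
        have h01 := cntE_false_singleton hp d.1 e.1
        have h02 := cntE_false_singleton hp d.2.1 e.2.1
        have hsame : List.countP (fun a => decide (a = p)) ((M.reverse.map swapD).map edd)
            = List.countP (fun a => decide (a = p)) (M.map edd) := by
          rw [hmapM, List.countP_reverse]
        conv_rhs => rw [hdec]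
        have : ((d.1, e.1, false) :: (M.reverse.map swapD) ++ (d.2.1, e.2.1, false) :: (N ++ T))
            = [(d.1, e.1, false)] ++ (M.reverse.map swapD) ++ ([(d.2.1, e.2.1, false)] ++ N ++ T) := by simp
        rw [this]
        simp only [cntE, List.map_append, List.map_cons, List.countP_append,
          List.countP_cons] at h01 h02 hsame ⊢
        omega
      refine ih _ ?_ good3 hk3 ?_
      · rw [hc3]; omega
      · rwa [hc3]

lemma card_filter_range (t : ℕ) (g : ℕ → Bool) :
    ((Finset.range t).filter fun i => g i = true).card = (List.range t).countP g := by
  induction t with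
  | zero => simp
  | succ t ih =>
    rw [Finset.range_add_one, List.range_succ, List.countP_append, Finset.filter_insert]
    by_cases h : g t = true
    · rw [if_pos h, Finset.card_insert_of_notMem (by simp)]
      simp [ih, List.countP_cons, h]
    · rw [if_neg h]
      simp [ih, List.countP_cons, h]

lemma countP_range_getD {α : Type*} (p : α → Bool) (dflt : α) (l : List α) :
    (List.range l.length).countP (fun i => p (l.getD i dflt)) = l.countP p := by
  induction l using List.reverseRecOn with
  | nil => simp
  | append_singleton l a ih =>
    rw [List.length_append, List.length_singleton, List.range_succ, List.countP_append,
      List.countP_append]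
    congr 1
    · rw [← ih]
      apply List.countP_congr
      intro i hi
      have hil : i < l.length := List.mem_range.1 hi
      simp [List.getD, List.getElem?_append, hil]
    · simp [List.countP_cons, List.getD, List.getElem?_append]

lemma cyc_link {l : List (Dt n)} (hch : List.IsChain lk l)
    (hwr : ∀ p ∈ l.getLast?, ∀ q ∈ l.head?, lk p q) {k : ℕ} (hk : k < l.length) :
    (l.get ⟨k, hk⟩).2.1 =
      (l.get ⟨(k+1) % l.length, Nat.mod_lt _ (by omega)⟩).1 := by
  by_cases h : k + 1 < l.length
  · have hm : (k+1) % l.length = k + 1 := Nat.mod_eq_of_lt h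
    have hc := List.isChain_iff_getElem.1 hch k (by omega)
    simp only [hm]
    exact hc
  · have hk1 : k + 1 = l.length := by omega
    have hm : (k+1) % l.length = 0 := by rw [hk1, Nat.mod_self]
    simp only [hm]
    refine hwr _ ?_ _ ?_
    · rw [List.getLast?_eq_getElem?]
      have : l.length - 1 = k := by omega
      rw [this, List.getElem?_eq_getElem hk]
      simp
    · rw [List.head?_eq_getElem?, List.getElem?_eq_getElem (by omega : 0 < l.length)]
      simp

end Aux

open List




/-- if `B` is a broken cycle with an odd number of actual edges and
no kinks, then there is a simple broken cycle with an odd number of actual edges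
whose vertex set is contained in that of `B`. -/
theorem stmt_4 (n : ℕ) (G : SimpleGraph (Fin n)) (fR fB : Fin n → ℕ)
    (B : BrokenCycle n G fR fB) (hodd : Odd B.numActual) (hnk : ¬ B.HasKink) :
    ∃ B' : BrokenCycle n G fR fB, B'.Simple ∧ Odd B'.numActual ∧
      Set.range B'.x ⊆ Set.range B.x := by
  classical
  set S : Set (Fin n) := Set.range B.x with hS
  set dart : ℕ → Dt n := fun i => (B.x i, B.x (i+1), B.actual i) with hdart
  set l₀ : List (Dt n) := (List.range B.t).map dart with hl₀
  have htpos := B.tpos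
  have hlen : l₀.length = B.t := by simp [hl₀]
  have hne : l₀ ≠ [] := by
    intro h
    rw [h] at hlen
    simp at hlen
    omega
  have hget? : ∀ k, k < B.t → l₀[k]? = some (dart k) := by
    intro k hk
    simp [hl₀, List.getElem?_map, List.getElem?_range hk]
  have hGood : GoodL G fR fB S l₀ := by
    refine ⟨hne, ?_, ?_, ?_, ?_⟩
    · intro dd hdd
      simp only [hl₀, List.mem_map, List.mem_range] at hdd
      obtain ⟨i, _, rfl⟩ := hdd
      exact ⟨fun h => B.hadj i h, fun h => B.hbroken i h⟩
    · rw [List.isChain_iff_getElem]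
      intro k hkl
      simp only [List.get_eq_getElem, hl₀, List.getElem_map, List.getElem_range]
      rfl
    · intro p hp q hq
      rw [List.getLast?_eq_getElem?] at hp
      rw [List.head?_eq_getElem?] at hq
      have h1 : l₀[l₀.length - 1]? = some (dart (B.t - 1)) := by
        rw [hlen]
        exact hget? (B.t - 1) (by omega)
      have h2 : l₀[0]? = some (dart 0) := hget? 0 htpos
      rw [h1] at hp
      rw [h2] at hq
      have hp' : p = dart (B.t - 1) := (by simpa using hp : _ = p).symm
      have hq' : q = dart 0 := (by simpa using hq : _ = q).symm
      subst hp'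
      subst hq'
      show B.x (B.t - 1 + 1) = B.x 0
      have ht1 : B.t - 1 + 1 = 0 + B.t := by omega
      rw [ht1]
      exact B.hper 0
    · intro dd hdd
      simp only [hl₀, List.mem_map, List.mem_range] at hdd
      obtain ⟨i, _, rfl⟩ := hdd
      rw [hS]
      exact ⟨⟨i, rfl⟩, ⟨i+1, rfl⟩⟩
  have hlabr : ∀ k, B.labR k = labRE fR (edd (dart k)) := by
    intro k
    simp [BrokenCycle.labR, labRE, edd, hdart, Sym2.map_pair_eq]
  have hlabb : ∀ k, B.labB k = labBE fB (edd (dart k)) := by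
    intro k
    simp [BrokenCycle.labB, labBE, edd, hdart, Sym2.map_pair_eq]
  have hKF : KFL fR fB l₀ := by
    intro p q hsub hp hq hcon
    obtain ⟨htc, hbd⟩ := hcon
    obtain ⟨a, b, hab, ha, hb, hcase⟩ := pair_subperm_index hsub
    have hal : a < B.t := by rw [← hlen]; simpa using ha
    have hbl : b < B.t := by rw [← hlen]; simpa using hb
    have hkey : ∀ (r : Sym2 (Fin n) × Bool) (k : ℕ), k < B.t →
        (l₀.map edd)[k]? = some r → edd (dart k) = r := by
      intro r k hk hkr
      rw [List.getElem?_map, hget? k hk] at hkr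
      simpa using hkr
    apply hnk
    have mk : ∀ (a b : ℕ), a < B.t → b < B.t → a ≠ b →
        edd (dart a) = p → edd (dart b) = q → B.HasKink := by
      intro a b hal hbl hab hpa hqb
      refine ⟨a, Finset.mem_range.2 hal, b, Finset.mem_range.2 hbl, hab, ?_, ?_, ?_, ?_⟩
      · have : (edd (dart a)).2 = true := by rw [hpa]; exact hp
        simpa [edd, hdart] using this
      · have : (edd (dart b)).2 = true := by rw [hqb]; exact hq
        simpa [edd, hdart] using this
      · obtain ⟨v, hv1, hv2⟩ := htc
        rw [← hpa] at hv1
        rw [← hqb] at hv2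
        have hv1' : v ∈ s(B.x a, B.x (a+1)) := hv1
        have hv2' : v ∈ s(B.x b, B.x (b+1)) := hv2
        refine ⟨v, ?_, ?_⟩
        · rcases Sym2.mem_iff.1 hv1' with rfl | rfl <;> simp
        · rcases Sym2.mem_iff.1 hv2' with rfl | rfl <;> simp
      · rw [hlabr a, hlabr b, hlabb a, hlabb b, hpa, hqb]
        exact hbd
    rcases hcase with ⟨h1, h2⟩ | ⟨h1, h2⟩
    · exact mk a b hal hbl hab (hkey p a hal h1) (hkey q b hbl h2)
    · exact mk b a hbl hal (Ne.symm hab) (hkey p b hbl h2) (hkey q a hal h1)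
  have hcnt0 : cntT l₀ = B.numActual := by
    show (List.countP (fun d => d.2.2) l₀) = _
    rw [hl₀, List.countP_map]
    rw [show B.numActual =
      ((Finset.range B.t).filter fun i => B.actual i = true).card from rfl]
    rw [card_filter_range]
    rfl
  obtain ⟨l', hG', hS', hodd'⟩ := mainL G fR fB (cntT l₀ + 1) l₀ (by omega) hGood hKF
    (by rw [hcnt0]; exact hodd)
  have hne' : l' ≠ [] := hG'.1
  have hlp : 0 < l'.length := List.length_pos_iff.2 hne'
  have hok' := hG'.2.1
  have hch' := hG'.2.2.1
  have hwr' := hG'.2.2.2.1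
  have hmem' := hG'.2.2.2.2
  set xf : ℕ → Fin n := fun i => (l'.get ⟨i % l'.length, Nat.mod_lt _ hlp⟩).1 with hxf
  set af : ℕ → Bool := fun i => (l'.get ⟨i % l'.length, Nat.mod_lt _ hlp⟩).2.2 with haf
  have hxf1 : ∀ i, xf (i+1) = (l'.get ⟨i % l'.length, Nat.mod_lt _ hlp⟩).2.1 := by
    intro i
    have hidx : (i+1) % l'.length = (i % l'.length + 1) % l'.length :=
      (Nat.mod_add_mod i l'.length 1).symm
    show (l'.get ⟨(i+1) % l'.length, Nat.mod_lt _ hlp⟩).1 = _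
    simp only [hidx]
    exact (cyc_link hch' hwr' (Nat.mod_lt _ hlp)).symm
  have hmodper : ∀ i, (i + l'.length) % l'.length = i % l'.length :=
    fun i => Nat.add_mod_right i _
  let B' : BrokenCycle n G fR fB :=
    { t := l'.length
      tpos := hlp
      x := xf
      hper := fun i => by simp only [hxf, hmodper i]
      actual := af
      hperA := fun i => by simp only [haf, hmodper i]
      hadj := fun i hi => by
        have hok := (hok' _ (List.get_mem l' _)).1 hi
        rw [hxf1 i]
        exact hok
      hbroken := fun i hi => by
        have hok := (hok' _ (List.get_mem l' _)).2 hi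
        rw [hxf1 i]
        exact hok }
  have hnum : B'.numActual = cntT l' := by
    show ((Finset.range l'.length).filter fun i => af i = true).card = _
    rw [card_filter_range]
    show _ = List.countP (fun d => d.2.2) l'
    rw [← countP_range_getD (fun d => d.2.2) (l'.get ⟨0, hlp⟩) l']
    apply List.countP_congr
    intro i hi
    have hil : i < l'.length := List.mem_range.1 hi
    have him : i % l'.length = i := Nat.mod_eq_of_lt hil
    simp [haf, him, List.getD, List.getElem?_eq_getElem hil]
  have hlabR' : ∀ (k : ℕ) (hk : k < l'.length),
      B'.labR k = labRE fR (edd (l'.get ⟨k, hk⟩)) := by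
    intro k hk
    have hkm : k % l'.length = k := Nat.mod_eq_of_lt hk
    show s(fR (xf k), fR (xf (k+1))) = _
    rw [hxf1 k]
    simp only [hxf, hkm]
    simp [labRE, edd, Sym2.map_pair_eq]
  have hlabB' : ∀ (k : ℕ) (hk : k < l'.length),
      B'.labB k = labBE fB (edd (l'.get ⟨k, hk⟩)) := by
    intro k hk
    have hkm : k % l'.length = k := Nat.mod_eq_of_lt hk
    show s(fB (xf k), fB (xf (k+1))) = _
    rw [hxf1 k]
    simp only [hxf, hkm]
    simp [labBE, edd, Sym2.map_pair_eq]
  have hsimple : B'.Simple := by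
    intro i hi j hj hij hai haj
    have hil : i < l'.length := Finset.mem_range.1 hi
    have hjl : j < l'.length := Finset.mem_range.1 hj
    have him : i % l'.length = i := Nat.mod_eq_of_lt hil
    have hjm : j % l'.length = j := Nat.mod_eq_of_lt hjl
    have hsub2 : [edd (l'.get ⟨i, hil⟩), edd (l'.get ⟨j, hjl⟩)] <+~ l'.map edd := by
      refine index_pair_subperm (L := l'.map edd) (i := i) (j := j) hij
        (by simpa using hil) (by simpa using hjl) ?_ ?_
      · rw [List.getElem?_map, List.getElem?_eq_getElem hil]; rfl
      · rw [List.getElem?_map, List.getElem?_eq_getElem hjl]; rfl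
    have hp2 : (edd (l'.get ⟨i, hil⟩)).2 = true := by
      have : af i = true := hai
      rw [haf] at this
      simp only [him] at this
      exact this
    have hq2 : (edd (l'.get ⟨j, hjl⟩)).2 = true := by
      have : af j = true := haj
      rw [haf] at this
      simp only [hjm] at this
      exact this
    have hbad' := hS' _ _ hsub2 hp2 hq2
    rw [hlabR' i hil, hlabR' j hjl, hlabB' i hil, hlabB' j hjl]
    constructor
    · intro hcon
      exact hbad' (Or.inl hcon)
    · intro hcon
      exact hbad' (Or.inr hcon)
  refine ⟨B', hsimple, ?_, ?_⟩
  · rw [hnum]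
    exact hodd'
  · rintro v ⟨i, rfl⟩
    exact (hmem' _ (List.get_mem l' _)).1
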